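/- For i = 1, …, m let f_i : ℝⁿ → ℝ be convex and C_i := {x ∈ ℝⁿ : f_i(x) ≤ 0}, with C := ∩_{i=1}^m C_i ≠ ∅. Let ℓ(k), r(k) ∈ {1, …, m} be given by the most violated constraint control in function value version: for every k and every i ∈ {1, …, m}, f_{ℓ(k)}(x^k) ≥ f_i(x^k) and f_{r(k)}(P_{C_{ℓ(k)}}(x^k)) ≥ f_i(P_{C_{ℓ(k)}}(x^k)). Let {x^k} be generated from any x^0 ∈ ℝⁿ by x^{k+1} := T_{C_{ℓ(k)}, C_{r(k)}}(x^k). Then there exists x* ∈ C such that x^k → x*. -/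

import Mathlib

noncomputable section

open Filter Metric RealInnerProductSpace

/-- Euclidean space ℝⁿ. -/
abbrev Euc (n : ℕ) := EuclideanSpace ℝ (Fin n)

/-- `P` is the metric projection onto `A`: `P x` is a point of `A` nearest to `x`. -/
def IsProjection {n : ℕ} (A : Set (Euc n)) (P : Euc n → Euc n) : Prop :=
  ∀ x, P x ∈ A ∧ ∀ a ∈ A, ‖x - P x‖ ≤ ‖x - a‖

/-- Reflection `R_A = 2 P_A - Id`, given the projection `P = P_A`. -/
def reflect {n : ℕ} (P : Euc n → Euc n) (x : Euc n) : Euc n := (2 : ℝ) • P x - x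

/-- `Z̄_{A,B} = Z̃_{A,B} ∘ Z_{A,B}`, where `Z_{A,B} = P_A ∘ P_B` and
`Z̃_{A,B} = (1/2)(P_A + P_B)`. -/
def Zbar {n : ℕ} (PA PB : Euc n → Euc n) (x : Euc n) : Euc n :=
  (2⁻¹ : ℝ) • (PA (PA (PB x)) + PB (PA (PB x)))

/-- `c` is the circumcenter of `w`, `R_A w`, `R_B w`: it lies in the affine hull of these
three points and is equidistant from them. -/
def IsCircumcenter {n : ℕ} (PA PB : Euc n → Euc n) (w c : Euc n) : Prop :=
  c ∈ affineSpan ℝ ({w, reflect PA w, reflect PB w} : Set (Euc n)) ∧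
    ‖c - w‖ = ‖c - reflect PA w‖ ∧ ‖c - w‖ = ‖c - reflect PB w‖

variable {n : ℕ} {A : Set (Euc n)} {P : Euc n → Euc n}

lemma proj_inner (hA : Convex ℝ A) (hP : IsProjection A P) (x : Euc n) {a : Euc n}
    (ha : a ∈ A) : ⟪x - P x, a - P x⟫ ≤ 0 := by
  have hne : Nonempty A := ⟨⟨P x, (hP x).1⟩⟩
  have hinf : ‖x - P x‖ = ⨅ w : A, ‖x - w‖ := by
    refine le_antisymm (le_ciInf fun w => (hP x).2 w w.2) ?_
    exact ciInf_le ⟨0, by rintro _ ⟨w, rfl⟩; positivity⟩ (⟨P x, (hP x).1⟩ : A)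
  exact (norm_eq_iInf_iff_real_inner_le_zero hA (hP x).1).mp hinf a ha

lemma proj_self (hP : IsProjection A P) {x : Euc n} (hx : x ∈ A) : P x = x := by
  have := (hP x).2 x hx
  simp only [sub_self, norm_zero] at this
  have : ‖x - P x‖ = 0 := le_antisymm this (norm_nonneg _)
  rw [norm_sub_eq_zero_iff] at this; exact this.symm

lemma proj_eq_of (hA : Convex ℝ A) (hP : IsProjection A P) {x b : Euc n} (hb : b ∈ A)
    (h : ∀ a ∈ A, ⟪x - b, a - b⟫ ≤ 0) : P x = b := by
  have h1 : ⟪x - P x, b - P x⟫ ≤ 0 := proj_inner hA hP x hb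
  have h2 : ⟪x - b, P x - b⟫ ≤ 0 := h _ (hP x).1
  have key : ⟪b - P x, b - P x⟫ ≤ 0 := by
    have : ⟪x - P x, b - P x⟫ - ⟪x - b, b - P x⟫ = ⟪b - P x, b - P x⟫ := by
      rw [← inner_sub_left]; congr 1; abel
    rw [← this]
    have h2' : 0 ≤ ⟪x - b, b - P x⟫ := by
      rw [show (b - P x : Euc n) = -(P x - b) by abel, inner_neg_right]; linarith
    linarith
  have : b - P x = 0 := by
    rw [real_inner_self_eq_norm_sq] at key
    have := sq_nonneg ‖b - P x‖
    have : ‖b - P x‖ = 0 := by nlinarith [norm_nonneg (b - P x)]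
    rwa [norm_eq_zero] at this
  rw [sub_eq_zero] at this; exact this.symm

lemma proj_quasi (hA : Convex ℝ A) (hP : IsProjection A P) (x : Euc n) {z : Euc n}
    (hz : z ∈ A) : ‖P x - z‖ ^ 2 + ‖x - P x‖ ^ 2 ≤ ‖x - z‖ ^ 2 := by
  have h := proj_inner hA hP x hz
  have e : (x - z : Euc n) = (x - P x) + (P x - z) := by abel
  rw [e, norm_add_sq_real]
  have : ⟪x - P x, P x - z⟫ = - ⟪x - P x, z - P x⟫ := by
    rw [show (P x - z : Euc n) = -(z - P x) by abel, inner_neg_right]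
  nlinarith [this]

lemma real_core (e g i a b qu qv : ℝ) (he0 : 0 ≤ e) (hg0 : 0 ≤ g)
    (hcs : i * i ≤ e * g) (eq1 : a * e + b * i = e) (eq2 : a * i + b * g = g)
    (hi : i ≤ -e) (hqu : 0 ≤ qu) (hqv : 0 ≤ qv)
    (hu0 : e = 0 → qu = 0) (hv0 : g = 0 → qv = 0) : 0 ≤ a * qu + b * qv := by
  rcases eq_or_lt_of_le he0 with he' | he'
  · -- e = 0
    have hi0 : i = 0 := by nlinarith
    have hqu' : qu = 0 := hu0 he'.symm
    rcases eq_or_lt_of_le hg0 with hg' | hg'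
    · have : qv = 0 := hv0 hg'.symm
      simp [hqu', this]
    · have hb1 : b = 1 := by
        have hbg : b * g = g := by rw [hi0] at eq2; simpa using eq2
        exact mul_right_cancel₀ hg'.ne' (by linarith : b * g = 1 * g)
      rw [hqu', hb1]; simpa using hqv
  · -- e > 0
    rcases eq_or_lt_of_le hcs with hD | hD
    · exfalso
      have h4 : e * (g - i) = 0 := by linear_combination i * eq1 - e * eq2 - b * hD
      have hgi : g = i := by
        rcases mul_eq_zero.mp h4 with h | h
        · linarith
        · linarith
      nlinarith
    · have hD' : 0 < e * g - i * i := by linarith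
      have h5 : a * (e * g - i * i) = g * (e - i) := by linear_combination g * eq1 - i * eq2
      have h6 : b * (e * g - i * i) = e * (g - i) := by linear_combination e * eq2 - i * eq1
      have ha : 0 ≤ a := by nlinarith [mul_nonneg hg0 (by linarith : (0:ℝ) ≤ e - i)]
      have hb : 0 ≤ b := by nlinarith [mul_nonneg he0 (by linarith : (0:ℝ) ≤ g - i)]
      have := mul_nonneg ha hqu
      have := mul_nonneg hb hqv
      linarith

lemma core_cone {n : ℕ} (u v p q : Euc n) (a b : ℝ) (hp : p = a • u + b • v)
    (h1 : ⟪p, u⟫ = ⟪u, u⟫) (h2 : ⟪p, v⟫ = ⟪v, v⟫) (hi : ⟪u, v⟫ ≤ -⟪u, u⟫)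
    (hqu : 0 ≤ ⟪q, u⟫) (hqv : 0 ≤ ⟪q, v⟫) : 0 ≤ ⟪q, p⟫ := by
  have eq1 : a * ⟪u, u⟫ + b * ⟪u, v⟫ = ⟪u, u⟫ := by
    rw [hp, inner_add_left, real_inner_smul_left, real_inner_smul_left,
      real_inner_comm u v] at h1
    linarith
  have eq2 : a * ⟪u, v⟫ + b * ⟪v, v⟫ = ⟪v, v⟫ := by
    rw [hp, inner_add_left, real_inner_smul_left, real_inner_smul_left] at h2
    linarith
  have hqp : ⟪q, p⟫ = a * ⟪q, u⟫ + b * ⟪q, v⟫ := by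
    rw [hp, inner_add_right, real_inner_smul_right, real_inner_smul_right]
  rw [hqp]
  refine real_core _ _ _ _ _ _ _ real_inner_self_nonneg real_inner_self_nonneg
    (real_inner_mul_inner_self_le u v) eq1 eq2 hi hqu hqv ?_ ?_
  · intro h; rw [inner_self_eq_zero.mp h, inner_zero_right]
  · intro h; rw [inner_self_eq_zero.mp h, inner_zero_right]




/-- From the equidistance condition, `⟪c - w, u⟫ = ⟪u, u⟫` where `u` is half the
reflection step. -/
lemma equidist_inner {n : ℕ} {c w uu rw' : Euc n} (hnorm : ‖c - w‖ = ‖c - rw'‖)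
    (he : c - rw' = (c - w) - (2 : ℝ) • uu) : ⟪uu, c - w⟫ = ⟪uu, uu⟫ := by
  have h : ‖c - w‖ ^ 2 = ‖(c - w) - (2 : ℝ) • uu‖ ^ 2 := by rw [← he, ← hnorm]
  have h' := norm_sub_sq_real (c - w) ((2 : ℝ) • uu)
  rw [real_inner_smul_right, norm_smul] at h'
  simp only [Real.norm_ofNat] at h'
  have h'' := h.trans h'
  have h2 : ⟪c - w, uu⟫ = ⟪uu, c - w⟫ := real_inner_comm _ _
  have h3 : ⟪uu, uu⟫ = ‖uu‖ ^ 2 := real_inner_self_eq_norm_sq uu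
  nlinarith [h'', h2, h3]

lemma le_of_sq_le_sq' {a b : ℝ} (ha : 0 ≤ a) (hb : 0 ≤ b) (h : a ^ 2 ≤ b ^ 2) :
    a ≤ b := by nlinarith

lemma quarter_sq {a b w : ℝ} (hb : 0 ≤ b) (hba : b ≤ a) (h : w ≤ (2⁻¹ * (a + b)) ^ 2) :
    w ≤ a ^ 2 := by nlinarith

lemma step_ineq {n : ℕ} {A B : Set (Euc n)} {PA PB : Euc n → Euc n}
    (hA : Convex ℝ A) (hB : Convex ℝ B)
    (hPA : IsProjection A PA) (hPB : IsProjection B PB) (x c : Euc n)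
    (hc : IsCircumcenter PA PB (Zbar PA PB x) c) {z : Euc n}
    (hzA : z ∈ A) (hzB : z ∈ B) :
    ‖c - z‖ ^ 2 + ‖x - PB x‖ ^ 2 + ‖PB x - PA (PB x)‖ ^ 2 ≤ ‖x - z‖ ^ 2 := by
  set y := PA (PB x) with hydef
  have hyA : y ∈ A := (hPA _).1
  have hyy : PA y = y := proj_self hPA hyA
  set b := PB y with hbdef
  have hbB : b ∈ B := (hPB _).1
  set w : Euc n := (2⁻¹ : ℝ) • (y + b) with hwdef
  have hw : Zbar PA PB x = w := by
    rw [Zbar, hwdef, ← hydef, hyy, ← hbdef]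
  rw [hw] at hc
  obtain ⟨hcmem, hcA, hcB⟩ := hc
  have hPBw : PB w = b := by
    refine proj_eq_of hB hPB hbB (fun q hq => ?_)
    have e1 : w - b = (2⁻¹ : ℝ) • (y - b) := by rw [hwdef]; module
    rw [e1, real_inner_smul_left]
    have := proj_inner hB hPB y hq
    rw [← hbdef] at this
    linarith
  set uu : Euc n := PA w - w with huu
  set vv : Euc n := b - w with hvv
  -- key inner product inequalities
  have hywv : y - w = -vv := by rw [hvv, hwdef]; module
  have hi : ⟪uu, vv⟫ ≤ -⟪uu, uu⟫ := by
    have h := proj_inner hA hPA w hyA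
    have e1 : w - PA w = -uu := by rw [huu]; abel
    have e2 : y - PA w = -vv - uu := by rw [← hywv, huu]; abel
    rw [e1, e2, inner_neg_left, inner_sub_right, inner_neg_right] at h
    linarith
  -- circumcenter equalities
  have h1 : ⟪uu, c - w⟫ = ⟪uu, uu⟫ := by
    refine equidist_inner hcA ?_
    rw [reflect, huu]; module
  have h2 : ⟪vv, c - w⟫ = ⟪vv, vv⟫ := by
    refine equidist_inner hcB ?_
    rw [reflect, hPBw, hvv]; module
  -- z side inequalities
  have hz1 : ⟪uu, uu⟫ ≤ ⟪uu, z - w⟫ := by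
    have h := proj_inner hA hPA w hzA
    have e1 : w - PA w = -uu := by rw [huu]; abel
    have e2 : z - PA w = (z - w) - uu := by rw [huu]; abel
    rw [e1, e2, inner_neg_left, inner_sub_right] at h
    linarith
  have hz2 : ⟪vv, vv⟫ ≤ ⟪vv, z - w⟫ := by
    have h := proj_inner hB hPB w hzB
    rw [hPBw] at h
    have e1 : w - b = -vv := by rw [hvv]; abel
    have e2 : z - b = (z - w) - vv := by rw [hvv]; abel
    rw [e1, e2, inner_neg_left, inner_sub_right] at h
    linarith
  have hqu : 0 ≤ ⟪z - c, uu⟫ := by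
    have e : ⟪z - c, uu⟫ = ⟪uu, z - w⟫ - ⟪uu, c - w⟫ := by
      rw [real_inner_comm uu (z - c), show z - c = (z - w) - (c - w) by abel,
        inner_sub_right]
    rw [e]; linarith
  have hqv : 0 ≤ ⟪z - c, vv⟫ := by
    have e : ⟪z - c, vv⟫ = ⟪vv, z - w⟫ - ⟪vv, c - w⟫ := by
      rw [real_inner_comm vv (z - c), show z - c = (z - w) - (c - w) by abel,
        inner_sub_right]
    rw [e]; linarith
  -- c - w lies in the cone spanned by uu, vv
  have hspan : ∃ a' b' : ℝ, c - w = a' • uu + b' • vv := by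
    have hwS : w ∈ ({w, reflect PA w, reflect PB w} : Set (Euc n)) :=
      Set.mem_insert _ _
    have hdir : c - w ∈ vectorSpan ℝ ({w, reflect PA w, reflect PB w} : Set (Euc n)) := by
      have h := AffineSubspace.vsub_mem_direction hcmem (mem_affineSpan ℝ hwS)
      rwa [direction_affineSpan] at h
    rw [vectorSpan_eq_span_vsub_set_right ℝ hwS] at hdir
    have himg : (· -ᵥ w) '' ({w, reflect PA w, reflect PB w} : Set (Euc n)) =
        ({0, reflect PA w - w, reflect PB w - w} : Set (Euc n)) := by
      simp [Set.image_insert_eq, vsub_eq_sub]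
    rw [himg, Submodule.span_insert_zero, Submodule.mem_span_pair] at hdir
    obtain ⟨a', b', hab⟩ := hdir
    have eA : reflect PA w - w = (2 : ℝ) • uu := by rw [reflect, huu]; module
    have eB : reflect PB w - w = (2 : ℝ) • vv := by rw [reflect, hPBw, hvv]; module
    refine ⟨a' * 2, b' * 2, ?_⟩
    rw [← hab, eA, eB, smul_smul, smul_smul]
  obtain ⟨a', b', hab⟩ := hspan
  -- Fejér step for the circumcenter
  have hkey : 0 ≤ ⟪z - c, c - w⟫ := by
    refine core_cone uu vv (c - w) (z - c) a' b' hab ?_ ?_ hi hqu hqv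
    · rw [real_inner_comm uu (c - w)]; exact h1
    · rw [real_inner_comm vv (c - w)]; exact h2
  have hcz : ‖c - z‖ ^ 2 ≤ ‖w - z‖ ^ 2 := by
    have e : w - z = -((z - c) + (c - w)) := by abel
    rw [e, norm_neg, norm_add_sq_real, ← norm_neg (z - c), neg_sub]
    nlinarith [sq_nonneg ‖c - w‖]
  -- chain of projection inequalities
  have hq1 : ‖PB x - z‖ ^ 2 + ‖x - PB x‖ ^ 2 ≤ ‖x - z‖ ^ 2 := proj_quasi hB hPB x hzB
  have hq2 : ‖y - z‖ ^ 2 + ‖PB x - y‖ ^ 2 ≤ ‖PB x - z‖ ^ 2 := proj_quasi hA hPA (PB x) hzA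
  have hq3 : ‖b - z‖ ^ 2 + ‖y - b‖ ^ 2 ≤ ‖y - z‖ ^ 2 := proj_quasi hB hPB y hzB
  have hq4 : ‖w - z‖ ≤ 2⁻¹ * (‖y - z‖ + ‖b - z‖) := by
    have e : w - z = (2⁻¹ : ℝ) • ((y - z) + (b - z)) := by rw [hwdef]; module
    rw [e, norm_smul]
    simp only [norm_inv, Real.norm_ofNat]
    have := norm_add_le (y - z) (b - z)
    linarith
  have hby : ‖b - z‖ ≤ ‖y - z‖ :=
    le_of_sq_le_sq' (norm_nonneg _) (norm_nonneg _)
      (by linarith [hq3, sq_nonneg ‖y - b‖])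
  have hwz : ‖w - z‖ ^ 2 ≤ ‖y - z‖ ^ 2 := by
    have h5 : ‖w - z‖ ^ 2 ≤ (2⁻¹ * (‖y - z‖ + ‖b - z‖)) ^ 2 :=
      pow_le_pow_left₀ (norm_nonneg _) hq4 2
    exact quarter_sq (norm_nonneg _) hby h5
  linarith [hcz, hwz, hq2, hq1]

lemma tendsto_of_sq_tendsto {u : ℕ → ℝ} (h0 : ∀ k, 0 ≤ u k)
    (h : Tendsto (fun k => u k ^ 2) atTop (nhds 0)) : Tendsto u atTop (nhds 0) := by
  have hs : Tendsto Real.sqrt (nhds 0) (nhds 0) := by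
    simpa [Real.sqrt_zero] using (Real.continuous_sqrt.tendsto 0)
  exact (hs.comp h).congr fun k => Real.sqrt_sq (h0 k)

theorem stmt9' {n m : ℕ} (f : Fin m → Euc n → ℝ)
    (hf : ∀ i, ConvexOn ℝ Set.univ (f i))
    (C : Fin m → Set (Euc n)) (hC : ∀ i, C i = {x | f i x ≤ 0})
    (hne : (⋂ i, C i).Nonempty)
    (P : Fin m → Euc n → Euc n) (hP : ∀ i, IsProjection (C i) (P i))
    (ℓ r : ℕ → Fin m) (x : ℕ → Euc n)
    (hℓ : ∀ k : ℕ, ∀ i : Fin m, f i (x k) ≤ f (ℓ k) (x k))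
    (hr : ∀ k : ℕ, ∀ i : Fin m, f i (P (ℓ k) (x k)) ≤ f (r k) (P (ℓ k) (x k)))
    (hx : ∀ k : ℕ,
      IsCircumcenter (P (ℓ k)) (P (r k)) (Zbar (P (ℓ k)) (P (r k)) (x k)) (x (k + 1))) :
    ∃ xstar ∈ ⋂ i, C i, Tendsto x atTop (nhds xstar) := by
  obtain ⟨z₀, hz₀⟩ := hne
  have hz₀' : ∀ i, z₀ ∈ C i := Set.mem_iInter.mp hz₀
  have hconv : ∀ i, Convex ℝ (C i) := by
    intro i; rw [hC i]
    have h := (hf i).convex_le 0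
    simpa using h
  have hcont : ∀ i, Continuous (f i) := fun i => (hf i).locallyLipschitz.continuous
  have hclosed : ∀ i, IsClosed (C i) := by
    intro i; rw [hC i]
    exact isClosed_le (hcont i) continuous_const
  -- residuals
  set r1 : ℕ → ℝ := fun k => ‖x k - P (r k) (x k)‖ with hr1def
  set r2 : ℕ → ℝ := fun k => ‖P (r k) (x k) - P (ℓ k) (P (r k) (x k))‖ with hr2def
  have key : ∀ (k : ℕ) (z : Euc n), (∀ i, z ∈ C i) →
      ‖x (k + 1) - z‖ ^ 2 + r1 k ^ 2 + r2 k ^ 2 ≤ ‖x k - z‖ ^ 2 := fun k z hz =>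
    step_ineq (hconv (ℓ k)) (hconv (r k)) (hP (ℓ k)) (hP (r k)) (x k) (x (k + 1))
      (hx k) (hz (ℓ k)) (hz (r k))
  have fejer : ∀ (z : Euc n), (∀ i, z ∈ C i) → ∀ k, ‖x (k + 1) - z‖ ≤ ‖x k - z‖ := by
    intro z hz k
    refine le_of_sq_le_sq' (norm_nonneg _) (norm_nonneg _) ?_
    have h := key k z hz
    nlinarith [sq_nonneg (r1 k), sq_nonneg (r2 k)]
  -- the distance-squared sequence converges
  set a : ℕ → ℝ := fun k => ‖x k - z₀‖ ^ 2 with hadef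
  have hamono : Antitone a := by
    refine antitone_nat_of_succ_le fun k => ?_
    have h := key k z₀ hz₀'
    show ‖x (k + 1) - z₀‖ ^ 2 ≤ ‖x k - z₀‖ ^ 2
    nlinarith [sq_nonneg (r1 k), sq_nonneg (r2 k)]
  have haL : Tendsto a atTop (nhds (⨅ k, a k)) := by
    refine tendsto_atTop_ciInf hamono ⟨0, ?_⟩
    rintro _ ⟨k, rfl⟩; positivity
  have haL1 : Tendsto (fun k => a (k + 1)) atTop (nhds (⨅ k, a k)) :=
    haL.comp (tendsto_add_atTop_nat 1)
  have hdiff : Tendsto (fun k => a k - a (k + 1)) atTop (nhds 0) := by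
    simpa using haL.sub haL1
  have hr1sq : Tendsto (fun k => r1 k ^ 2) atTop (nhds 0) := by
    refine squeeze_zero (fun k => sq_nonneg _) (fun k => ?_) hdiff
    have h := key k z₀ hz₀'
    have h2 := sq_nonneg (r2 k)
    show r1 k ^ 2 ≤ ‖x k - z₀‖ ^ 2 - ‖x (k + 1) - z₀‖ ^ 2
    nlinarith
  have hr2sq : Tendsto (fun k => r2 k ^ 2) atTop (nhds 0) := by
    refine squeeze_zero (fun k => sq_nonneg _) (fun k => ?_) hdiff
    have h := key k z₀ hz₀'
    have h2 := sq_nonneg (r1 k)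
    show r2 k ^ 2 ≤ ‖x k - z₀‖ ^ 2 - ‖x (k + 1) - z₀‖ ^ 2
    nlinarith
  have hr1t : Tendsto r1 atTop (nhds 0) :=
    tendsto_of_sq_tendsto (fun k => norm_nonneg _) hr1sq
  have hr2t : Tendsto r2 atTop (nhds 0) :=
    tendsto_of_sq_tendsto (fun k => norm_nonneg _) hr2sq
  -- boundedness and a convergent subsequence
  have hbdd : ∀ k, x k ∈ closedBall z₀ ‖x 0 - z₀‖ := by
    intro k
    have hanti : Antitone fun k => ‖x k - z₀‖ :=
      antitone_nat_of_succ_le (fejer z₀ hz₀')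
    have := hanti (Nat.zero_le k)
    simpa [mem_closedBall, dist_eq_norm] using this
  obtain ⟨p, _, φ, hφ, hxφ⟩ :=
    tendsto_subseq_of_bounded (isBounded_closedBall (x := z₀) (r := ‖x 0 - z₀‖)) hbdd
  -- pigeonhole: some index i₀ occurs infinitely often along φ
  have hm : 0 < m := Fin.pos (ℓ 0)
  have : ∃ i₀ : Fin m, Set.Infinite {j | ℓ (φ j) = i₀} := by
    obtain ⟨i₀, hi₀⟩ := Finite.exists_infinite_fiber (fun j => ℓ (φ j))
    exact ⟨i₀, by rwa [← Set.infinite_coe_iff]⟩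
  obtain ⟨i₀, hinf⟩ := this
  have hinf' : Set.Infinite (setOf fun j => ℓ (φ j) = i₀) := hinf
  set ψ : ℕ → ℕ := Nat.nth (fun j => ℓ (φ j) = i₀) with hψdef
  have hψmono : StrictMono ψ := Nat.nth_strictMono hinf'
  have hψeq : ∀ j, ℓ (φ (ψ j)) = i₀ := fun j => Nat.nth_mem_of_infinite hinf' j
  set σ : ℕ → ℕ := fun j => φ (ψ j) with hσdef
  have hσmono : StrictMono σ := hφ.comp hψmono
  have hxσ : Tendsto (fun j => x (σ j)) atTop (nhds p) :=
    hxφ.comp hψmono.tendsto_atTop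
  -- the auxiliary points y k = P (ℓ k) (P (r k) (x k))
  set y : ℕ → Euc n := fun k => P (ℓ k) (P (r k) (x k)) with hydef
  have hyC : ∀ k, y k ∈ C (ℓ k) := fun k => (hP (ℓ k) _).1
  have hxy : ∀ k, ‖x k - y k‖ ≤ r1 k + r2 k := by
    intro k
    have h := norm_add_le (x k - P (r k) (x k)) (P (r k) (x k) - y k)
    simpa [hr1def, hr2def, hydef, sub_add_sub_cancel] using h
  have hdiff0 : Tendsto (fun j => x (σ j) - y (σ j)) atTop (nhds 0) := by
    refine squeeze_zero_norm (fun j => hxy (σ j)) ?_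
    have := (hr1t.add hr2t).comp hσmono.tendsto_atTop
    simpa [Function.comp_def] using this
  have hyσ : Tendsto (fun j => y (σ j)) atTop (nhds p) := by
    have h := hxσ.sub hdiff0
    simpa using h
  have hpC : p ∈ C i₀ := by
    refine (hclosed i₀).mem_of_tendsto hyσ (Filter.Eventually.of_forall fun j => ?_)
    have := hyC (σ j)
    rwa [hσdef, hψeq j] at this
  have hfp : f i₀ p ≤ 0 := by rw [hC i₀] at hpC; exact hpC
  have hall : ∀ i, f i p ≤ 0 := by
    intro i
    have h1 : Tendsto (fun j => f i (x (σ j))) atTop (nhds (f i p)) :=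
      ((hcont i).tendsto p).comp hxσ
    have h2 : Tendsto (fun j => f i₀ (x (σ j))) atTop (nhds (f i₀ p)) :=
      ((hcont i₀).tendsto p).comp hxσ
    have hle : f i p ≤ f i₀ p := by
      refine le_of_tendsto_of_tendsto' h1 h2 fun j => ?_
      have h := hℓ (σ j) i
      rwa [show ℓ (σ j) = i₀ from hψeq j] at h
    linarith
  have hpC' : p ∈ ⋂ i, C i := Set.mem_iInter.mpr fun i => by rw [hC i]; exact hall i
  refine ⟨p, hpC', ?_⟩
  -- Fejér monotonicity w.r.t. p gives convergence of the whole sequence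
  have hanti : Antitone fun k => ‖x k - p‖ :=
    antitone_nat_of_succ_le (fejer p (Set.mem_iInter.mp hpC'))
  have hLp : Tendsto (fun k => ‖x k - p‖) atTop (nhds (⨅ k, ‖x k - p‖)) := by
    refine tendsto_atTop_ciInf hanti ⟨0, ?_⟩
    rintro _ ⟨k, rfl⟩; positivity
  have hsub0 : Tendsto (fun j => ‖x (σ j) - p‖) atTop (nhds 0) := by
    have h := tendsto_iff_dist_tendsto_zero.mp hxσ
    simpa [dist_eq_norm] using h
  have hinf0 : (⨅ k, ‖x k - p‖) = 0 := by
    have hsub : Tendsto (fun j => ‖x (σ j) - p‖) atTop (nhds (⨅ k, ‖x k - p‖)) :=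
      hLp.comp hσmono.tendsto_atTop
    exact tendsto_nhds_unique hsub hsub0
  have hfinal : Tendsto (fun k => ‖x k - p‖) atTop (nhds 0) := hinf0 ▸ hLp
  rw [tendsto_iff_dist_tendsto_zero]
  simpa [dist_eq_norm] using hfinal

/-- Global convergence of the successive cCRM with the most violated constraint control
sequence (function value version): the iterates converge to some point of `C = ∩ᵢ Cᵢ`. -/
theorem stmt9 {n m : ℕ} (f : Fin m → Euc n → ℝ)
    (hf : ∀ i, ConvexOn ℝ Set.univ (f i))
    (C : Fin m → Set (Euc n)) (hC : ∀ i, C i = {x | f i x ≤ 0})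
    (hne : (⋂ i, C i).Nonempty)
    (P : Fin m → Euc n → Euc n) (hP : ∀ i, IsProjection (C i) (P i))
    (ℓ r : ℕ → Fin m) (x : ℕ → Euc n)
    (hℓ : ∀ k : ℕ, ∀ i : Fin m, f i (x k) ≤ f (ℓ k) (x k))
    (hr : ∀ k : ℕ, ∀ i : Fin m, f i (P (ℓ k) (x k)) ≤ f (r k) (P (ℓ k) (x k)))
    (hx : ∀ k : ℕ,
      IsCircumcenter (P (ℓ k)) (P (r k)) (Zbar (P (ℓ k)) (P (r k)) (x k)) (x (k + 1))) :
    ∃ xstar ∈ ⋂ i, C i, Tendsto x atTop (nhds xstar) :=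
  stmt9' f hf C hC hne P hP ℓ r x hℓ hr hx
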